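/- Let C be a real n×m matrix and consider the bilinear game q(x,y) = xᵀC y on ℝ^n × ℝ^m. Then (x,y) is a global minimax point of q if and only if Cᵀx = 0; and (x,y) is a local minimax point of q if and only if Cᵀx = 0 and C y = 0. -/

import Mathlib

open Filter Matrix

/-- Local upper envelope `f̄_{ε,y*}` (unconstrained case), in the extended reals. -/
noncomputable def envU {n m : ℕ}
    (f : EuclideanSpace ℝ (Fin n) → EuclideanSpace ℝ (Fin m) → ℝ)
    (ystar : EuclideanSpace ℝ (Fin m)) (ε : ℝ)
    (x : EuclideanSpace ℝ (Fin n)) : EReal :=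
  ⨆ y ∈ {y : EuclideanSpace ℝ (Fin m) | ‖y - ystar‖ ≤ ε}, ((f x y : ℝ) : EReal)

/-- `(x*, y*)` is a local minimax point of `f` (unconstrained case). -/
def IsLocalMinimax {n m : ℕ}
    (f : EuclideanSpace ℝ (Fin n) → EuclideanSpace ℝ (Fin m) → ℝ)
    (xstar : EuclideanSpace ℝ (Fin n)) (ystar : EuclideanSpace ℝ (Fin m)) : Prop :=
  (∃ ε > (0 : ℝ), ∀ y, ‖y - ystar‖ ≤ ε → f xstar y ≤ f xstar ystar) ∧
  (∃ εseq : ℕ → ℝ, (∀ k, 0 < εseq k) ∧ Tendsto εseq atTop (nhds 0) ∧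
    ∀ k, ∃ δ > (0 : ℝ), ∀ x, ‖x - xstar‖ ≤ δ →
      envU f ystar (εseq k) xstar ≤ envU f ystar (εseq k) x)

/-- `(xs, ys)` is a global minimax point of `f` (unconstrained case). -/
def IsGlobalMinimax {n m : ℕ}
    (f : EuclideanSpace ℝ (Fin n) → EuclideanSpace ℝ (Fin m) → ℝ)
    (xs : EuclideanSpace ℝ (Fin n)) (ys : EuclideanSpace ℝ (Fin m)) : Prop :=
  (∀ y, f xs y ≤ f xs ys) ∧
  (∀ x, ∀ c : ℝ, (∀ y, f x y ≤ c) → f xs ys ≤ c)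

/-- The bilinear game `q(x,y) = xᵀ C y`. -/
noncomputable def bilinGame {n m : ℕ} (C : Matrix (Fin n) (Fin m) ℝ)
    (x : EuclideanSpace ℝ (Fin n)) (y : EuclideanSpace ℝ (Fin m)) : ℝ :=
  x ⬝ᵥ (C *ᵥ y)

section Helpers

open RealInnerProductSpace

/-- Reinterpret a plain vector as an element of Euclidean space. -/
def toE {k : ℕ} (v : Fin k → ℝ) : EuclideanSpace ℝ (Fin k) := WithLp.toLp 2 v

lemma dot_inner {m : ℕ} (w u : EuclideanSpace ℝ (Fin m)) :
    (w : Fin m → ℝ) ⬝ᵥ (u : Fin m → ℝ) = ⟪w, u⟫ := by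
  simp [PiLp.inner_apply, dotProduct, RCLike.inner_apply, mul_comm]

lemma bilin_right {n m : ℕ} (C : Matrix (Fin n) (Fin m) ℝ)
    (x : EuclideanSpace ℝ (Fin n)) (y : EuclideanSpace ℝ (Fin m)) :
    bilinGame C x y = ⟪toE (Cᵀ *ᵥ x), y⟫ := by
  rw [← dot_inner]
  simp only [toE]
  simp [bilinGame, Matrix.dotProduct_mulVec, Matrix.mulVec_transpose]

lemma bilin_left {n m : ℕ} (C : Matrix (Fin n) (Fin m) ℝ)
    (x : EuclideanSpace ℝ (Fin n)) (y : EuclideanSpace ℝ (Fin m)) :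
    bilinGame C x y = ⟪x, toE (C *ᵥ y)⟫ := by
  rw [← dot_inner]; rfl

lemma envU_le {n m : ℕ} {f : EuclideanSpace ℝ (Fin n) → EuclideanSpace ℝ (Fin m) → ℝ}
    {ystar : EuclideanSpace ℝ (Fin m)} {ε : ℝ} {x : EuclideanSpace ℝ (Fin n)} {c : ℝ}
    (h : ∀ y, ‖y - ystar‖ ≤ ε → f x y ≤ c) : envU f ystar ε x ≤ (c : EReal) := by
  refine iSup₂_le fun y hy => ?_
  exact_mod_cast h y hy

lemma le_envU {n m : ℕ} {f : EuclideanSpace ℝ (Fin n) → EuclideanSpace ℝ (Fin m) → ℝ}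
    {ystar : EuclideanSpace ℝ (Fin m)} {ε : ℝ} {x : EuclideanSpace ℝ (Fin n)}
    (hε : 0 ≤ ε) : ((f x ystar : ℝ) : EReal) ≤ envU f ystar ε x := by
  refine le_iSup₂_of_le ystar ?_ le_rfl
  simp [hε]

lemma envU_zero {n m : ℕ} {f : EuclideanSpace ℝ (Fin n) → EuclideanSpace ℝ (Fin m) → ℝ}
    {ystar : EuclideanSpace ℝ (Fin m)} {ε : ℝ} {x : EuclideanSpace ℝ (Fin n)}
    (hε : 0 ≤ ε) (h : ∀ y, f x y = 0) : envU f ystar ε x = 0 := by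
  refine le_antisymm ?_ ?_
  · have := envU_le (f := f) (ystar := ystar) (ε := ε) (x := x) (c := 0)
      (fun y _ => (h y).le)
    simpa using this
  · have := le_envU (f := f) (ystar := ystar) (ε := ε) (x := x) hε
    rw [h ystar] at this
    simpa using this

lemma localmax_zero {m : ℕ} {w ystar : EuclideanSpace ℝ (Fin m)} {ε : ℝ} (hε : 0 < ε)
    (h : ∀ y, ‖y - ystar‖ ≤ ε → ⟪w, y⟫ ≤ ⟪w, ystar⟫) : w = 0 := by
  by_contra hw
  have hnw : 0 < ‖w‖ := norm_pos_iff.mpr hw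
  set c : ℝ := ε / ‖w‖ with hc
  have hcpos : 0 < c := div_pos hε hnw
  have hmem : ‖(ystar + c • w) - ystar‖ ≤ ε := by
    rw [add_sub_cancel_left, norm_smul, Real.norm_eq_abs, abs_of_pos hcpos, hc,
      div_mul_cancel₀ _ hnw.ne']
  have := h _ hmem
  rw [inner_add_right, real_inner_smul_right] at this
  have h3 : (0:ℝ) < ⟪w, w⟫ := by rw [real_inner_self_eq_norm_sq]; positivity
  nlinarith

end Helpers

open RealInnerProductSpace in
/-- In the bilinear game `q(x,y) = xᵀ C y`, global minimax points are exactly the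
pairs with `Cᵀ x = 0`, and local minimax points are exactly the pairs with
`Cᵀ x = 0` and `C y = 0`. -/
theorem bilinGame_minimax_characterization {n m : ℕ} (C : Matrix (Fin n) (Fin m) ℝ)
    (x : EuclideanSpace ℝ (Fin n)) (y : EuclideanSpace ℝ (Fin m)) :
    (IsGlobalMinimax (bilinGame C) x y ↔ Cᵀ *ᵥ x = 0) ∧
    (IsLocalMinimax (bilinGame C) x y ↔ (Cᵀ *ᵥ x = 0 ∧ C *ᵥ y = 0)) := by
  -- preliminary facts
  have hmax_imp : ∀ ε : ℝ, 0 < ε →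
      (∀ y', ‖y' - y‖ ≤ ε → bilinGame C x y' ≤ bilinGame C x y) → Cᵀ *ᵥ x = 0 := by
    intro ε hε h
    have hw : toE (Cᵀ *ᵥ x) = 0 := by
      refine localmax_zero (ystar := y) hε fun y' hy' => ?_
      rw [← bilin_right, ← bilin_right]
      exact h y' hy'
    funext i
    have hw' := congrArg WithLp.ofLp hw
    simpa [toE] using congrFun hw' i
  have hq_zero : Cᵀ *ᵥ x = 0 → ∀ y', bilinGame C x y' = 0 := by
    intro hx y'
    have h0 : toE (Cᵀ *ᵥ x) = (0 : EuclideanSpace ℝ (Fin m)) := by rw [hx]; simp [toE]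
    rw [bilin_right, h0, inner_zero_left]
  constructor
  · -- global minimax characterization
    constructor
    · rintro ⟨h1, _⟩
      exact hmax_imp 1 one_pos fun y' _ => h1 y'
    · intro hx
      refine ⟨fun y' => by rw [hq_zero hx y', hq_zero hx y], fun x' c hc => ?_⟩
      have h0 : bilinGame C x' 0 = 0 := by
        rw [bilin_right, inner_zero_right]
      rw [hq_zero hx y]
      linarith [hc 0]
  · -- local minimax characterization
    constructor
    · rintro ⟨⟨ε, hε, h1⟩, ⟨εs, hpos, htend, h2⟩⟩
      have hx : Cᵀ *ᵥ x = 0 := hmax_imp ε hε h1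
      refine ⟨hx, ?_⟩
      by_contra hv0
      set v : EuclideanSpace ℝ (Fin n) := toE (C *ᵥ y) with hv
      have hvne : v ≠ 0 := fun h => hv0 (by have h' := congrArg WithLp.ofLp h; simpa [hv, toE] using h')
      have hvnorm : 0 < ‖v‖ := norm_pos_iff.mpr hvne
      set w : EuclideanSpace ℝ (Fin m) := toE (Cᵀ *ᵥ v) with hwdef
      have ha : (0:ℝ) < ⟪v, v⟫ := by
        rw [real_inner_self_eq_norm_sq]; positivity
      have hwy : ⟪w, y⟫ = ⟪v, v⟫ := by
        rw [hwdef, ← bilin_right, bilin_left, ← hv]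
      -- choose a small enough ε from the sequence
      have hb : (0:ℝ) < ⟪v, v⟫ / (‖w‖ + 1) := by positivity
      obtain ⟨k, hk⟩ := (htend.eventually_lt_const hb).exists
      obtain ⟨δ, hδ, h3⟩ := h2 k
      set ε' := εs k with hε'def
      have hε' : 0 < ε' := hpos k
      set t : ℝ := δ / ‖v‖ with ht
      have htpos : 0 < t := div_pos hδ hvnorm
      set x' := x - t • v with hx'
      have hxd : ‖x' - x‖ ≤ δ := by
        rw [hx', sub_sub_cancel_left, norm_neg, norm_smul, Real.norm_eq_abs,
          abs_of_pos htpos, ht, div_mul_cancel₀ _ hvnorm.ne']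
      have hε'w : ε' * ‖w‖ < ⟪v, v⟫ := by
        rw [lt_div_iff₀ (by positivity)] at hk
        nlinarith [norm_nonneg w, hε'.le]
      have hub : ∀ y', ‖y' - y‖ ≤ ε' →
          bilinGame C x' y' ≤ -(t * (⟪v, v⟫ - ε' * ‖w‖)) := by
        intro y' hy'
        have e1 : bilinGame C x' y' = bilinGame C x y' - t * bilinGame C v y' := by
          rw [bilin_left, bilin_left, bilin_left, hx', inner_sub_left,
            real_inner_smul_left]
        have e2 : bilinGame C x y' = 0 := hq_zero hx y'
        have e3 : bilinGame C v y' = ⟪w, y'⟫ := by rw [bilin_right, ← hwdef]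
        have e4 : ⟪v, v⟫ - ε' * ‖w‖ ≤ ⟪w, y'⟫ := by
          have hsplit : ⟪w, y'⟫ = ⟪w, y⟫ + ⟪w, y' - y⟫ := by
            rw [← inner_add_right, add_sub_cancel]
          have hcs := abs_le.mp (abs_real_inner_le_norm w (y' - y))
          have h6 : ‖w‖ * ‖y' - y‖ ≤ ‖w‖ * ε' :=
            mul_le_mul_of_nonneg_left hy' (norm_nonneg w)
          rw [hsplit, hwy]
          linarith [hcs.1]
        rw [e1, e2, e3]
        nlinarith [htpos.le]
      have h0 : envU (bilinGame C) y ε' x = 0 := envU_zero hε'.le (hq_zero hx)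
      have hle := h3 x' hxd
      rw [h0] at hle
      have hup := envU_le hub
      have hfin : (0:EReal) ≤ ((-(t * (⟪v, v⟫ - ε' * ‖w‖)) : ℝ) : EReal) :=
        le_trans hle hup
      have : (0:ℝ) ≤ -(t * (⟪v, v⟫ - ε' * ‖w‖)) := by exact_mod_cast hfin
      nlinarith
    · rintro ⟨hx, hy⟩
      have hq := hq_zero hx
      have hqy : ∀ x' : EuclideanSpace ℝ (Fin n), bilinGame C x' y = 0 := by
        intro x'
        have h0 : toE (C *ᵥ y) = (0 : EuclideanSpace ℝ (Fin n)) := by rw [hy]; simp [toE]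
        rw [bilin_left, h0, inner_zero_right]
      refine ⟨⟨1, one_pos, fun y' _ => by rw [hq y', hq y]⟩,
        ⟨fun k => 1 / (k + 1), fun k => by positivity,
          tendsto_one_div_add_atTop_nhds_zero_nat, fun k => ?_⟩⟩
      refine ⟨1, one_pos, fun x' _ => ?_⟩
      rw [envU_zero (by positivity) hq]
      have hle := le_envU (f := bilinGame C) (ystar := y) (x := x')
        (ε := 1 / ((k : ℝ) + 1)) (by positivity)
      rw [hqy x'] at hle
      simpa using hle
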